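/- Monotonicity of the finite state projection: for the truncated CME generator A^Ω (a principal submatrix of the full Metzler generator A obtained by deleting states outside Ω), the truncated solution is entrywise bounded above by the full solution: exp(tA^Ω)(P₀|_Ω)(x) ≤ exp(tA)P₀(x) for all x ∈ Ω, t ≥ 0, whenever P₀ ≥ 0. -/

import Mathlib

open Matrix NormedSpace

section FSPAux

variable {S : Type*} [Fintype S] [DecidableEq S]

private lemma fsp_exp_entry_eq (M : Matrix S S ℝ) (i j : S) :
    exp M i j = ∑' (n : ℕ), (((n.factorial : ℕ) : ℝ)⁻¹ * (M ^ n) i j) := by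
  letI : SeminormedRing (Matrix S S ℝ) := Matrix.linftyOpSemiNormedRing
  letI : NormedRing (Matrix S S ℝ) := Matrix.linftyOpNormedRing
  letI : NormedAlgebra ℝ (Matrix S S ℝ) := Matrix.linftyOpNormedAlgebra
  have hs : Summable fun n : ℕ => (((n.factorial : ℕ) : ℝ)⁻¹) • M ^ n := expSeries_summable' M
  have hs1 : Summable fun n : ℕ => ((((n.factorial : ℕ) : ℝ)⁻¹) • M ^ n) i :=
    (Pi.summable).mp hs i
  rw [exp_eq_tsum (𝕂 := ℝ)]
  show (∑' (n : ℕ), (((n.factorial : ℕ) : ℝ)⁻¹) • M ^ n) i j = _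
  erw [tsum_apply hs, tsum_apply hs1]
  rfl

private lemma fsp_entry_summable (M : Matrix S S ℝ) (i j : S) :
    Summable fun n : ℕ => (((n.factorial : ℕ) : ℝ)⁻¹ * (M ^ n) i j) := by
  letI : SeminormedRing (Matrix S S ℝ) := Matrix.linftyOpSemiNormedRing
  letI : NormedRing (Matrix S S ℝ) := Matrix.linftyOpNormedRing
  letI : NormedAlgebra ℝ (Matrix S S ℝ) := Matrix.linftyOpNormedAlgebra
  have hs : Summable fun n : ℕ => (((n.factorial : ℕ) : ℝ)⁻¹) • M ^ n := expSeries_summable' M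
  have h1 : Summable fun n : ℕ => ((((n.factorial : ℕ) : ℝ)⁻¹) • M ^ n) i :=
    (Pi.summable).mp hs i
  have h2 : Summable fun n : ℕ => (((((n.factorial : ℕ) : ℝ)⁻¹) • M ^ n) i) j :=
    (Pi.summable).mp h1 j
  exact h2

private lemma fsp_exp_smul_one (r : ℝ) :
    exp (r • (1 : Matrix S S ℝ)) = Real.exp r • (1 : Matrix S S ℝ) := by
  letI : SeminormedRing (Matrix S S ℝ) := Matrix.linftyOpSemiNormedRing
  letI : NormedRing (Matrix S S ℝ) := Matrix.linftyOpNormedRing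
  letI : NormedAlgebra ℝ (Matrix S S ℝ) := Matrix.linftyOpNormedAlgebra
  have : r • (1 : Matrix S S ℝ) = algebraMap ℝ (Matrix S S ℝ) r :=
    (Algebra.algebraMap_eq_smul_one r).symm
  rw [this]
  erw [← map_exp (algebraMap ℝ (Matrix S S ℝ)) (continuous_algebraMap _ _),
    Algebra.algebraMap_eq_smul_one, Real.exp_eq_exp_ℝ]

private lemma fsp_exp_shift (M : Matrix S S ℝ) (r : ℝ) :
    exp (M - r • (1 : Matrix S S ℝ)) = Real.exp (-r) • exp M := by
  have hc : Commute ((-r) • (1 : Matrix S S ℝ)) M := by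
    simpa using (Commute.one_left M).smul_left (-r)
  have : M - r • (1 : Matrix S S ℝ) = (-r) • (1 : Matrix S S ℝ) + M := by
    rw [neg_smul, sub_eq_neg_add]
  rw [this, Matrix.exp_add_of_commute _ _ hc, fsp_exp_smul_one, smul_mul_assoc, one_mul]

private lemma fsp_pow_nonneg_and_sub_le {Ω : Set S} [DecidablePred (· ∈ Ω)]
    (M : Matrix S S ℝ) (hM : ∀ i j, 0 ≤ M i j) (n : ℕ) :
    (∀ i j, 0 ≤ (M ^ n) i j) ∧
    (∀ x y : Ω, ((M.submatrix (Subtype.val : Ω → S) Subtype.val) ^ n) x y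
        ≤ (M ^ n) x.1 y.1) := by
  induction n with
  | zero =>
    refine ⟨fun i j => ?_, fun x y => ?_⟩
    · simp only [pow_zero, Matrix.one_apply]
      split <;> norm_num
    · simp only [pow_zero, Matrix.one_apply]
      by_cases h : x = y
      · subst h; simp
      · have : (x : S) ≠ (y : S) := fun hc => h (Subtype.ext hc)
        rw [if_neg h, if_neg this]
  | succ n ih =>
    obtain ⟨ihpos, ihle⟩ := ih
    constructor
    · intro i j
      rw [pow_succ, Matrix.mul_apply]
      exact Finset.sum_nonneg fun k _ => mul_nonneg (ihpos i k) (hM k j)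
    · intro x y
      rw [pow_succ, pow_succ, Matrix.mul_apply, Matrix.mul_apply]
      have h1 : ∑ z : Ω, ((M.submatrix (Subtype.val : Ω → S) Subtype.val) ^ n) x z *
            (M.submatrix (Subtype.val : Ω → S) Subtype.val) z y
          ≤ ∑ z : Ω, (M ^ n) x.1 z.1 * M z.1 y.1 := by
        refine Finset.sum_le_sum fun z _ => ?_
        exact mul_le_mul_of_nonneg_right (ihle x z) (hM z.1 y.1)
      refine h1.trans ?_
      have h2 : ∑ z : Ω, (M ^ n) x.1 z.1 * M z.1 y.1
          = ∑ z ∈ Finset.univ.filter (· ∈ Ω), (M ^ n) x.1 z * M z y.1 :=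
        (Finset.sum_subtype _ (by simp) fun z => (M ^ n) x.1 z * M z y.1).symm
      rw [h2]
      refine Finset.sum_le_sum_of_subset_of_nonneg (Finset.filter_subset _ _) ?_
      intro k _ _
      exact mul_nonneg (ihpos x.1 k) (hM k y.1)

end FSPAux

/-- monotonicity of the finite state projection: the truncated
solution is entrywise bounded above by the full solution. -/
theorem fsp_monotonicity (S : Type*) [Fintype S] [DecidableEq S]
    (Ω : Set S) [DecidablePred (· ∈ Ω)]
    (A : Matrix S S ℝ)
    (hMetzler : ∀ i j, i ≠ j → 0 ≤ A i j)
    (hcols : ∀ j, ∑ i, A i j ≤ 0)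
    (P0 : S → ℝ) (hP0 : ∀ i, 0 ≤ P0 i) :
    ∀ t : ℝ, 0 ≤ t → ∀ x : Ω,
      (NormedSpace.exp (t • A.submatrix (Subtype.val : Ω → S) Subtype.val)).mulVec
        (fun y : Ω => P0 y) x ≤
      (NormedSpace.exp (t • A)).mulVec P0 x := by
  intro t ht x
  -- diagonal entries are nonpositive
  have hdiag : ∀ j, A j j ≤ 0 := by
    intro j
    have h1 : ∑ i ∈ Finset.univ.erase j, A i j ≥ 0 :=
      Finset.sum_nonneg fun i hi => hMetzler i j (Finset.ne_of_mem_erase hi)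
    have h2 : A j j + ∑ i ∈ Finset.univ.erase j, A i j = ∑ i, A i j :=
      Finset.add_sum_erase Finset.univ (fun i => A i j) (Finset.mem_univ j)
    linarith [hcols j]
  set c : ℝ := ∑ j, -(A j j) with hc_def
  have hc_ge : ∀ j, -(A j j) ≤ c := fun j =>
    Finset.single_le_sum (f := fun k => -(A k k)) (fun k _ => by simpa using neg_nonneg.mpr (hdiag k))
      (Finset.mem_univ j)
  -- the shifted matrix
  set M : Matrix S S ℝ := A + c • (1 : Matrix S S ℝ) with hM_def
  have hMnn : ∀ i j, 0 ≤ M i j := by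
    intro i j
    by_cases h : i = j
    · subst h
      simp only [hM_def, Matrix.add_apply, Matrix.smul_apply, Matrix.one_apply_eq, smul_eq_mul,
        mul_one]
      linarith [hc_ge i]
    · simp only [hM_def, Matrix.add_apply, Matrix.smul_apply, Matrix.one_apply_ne h, smul_eq_mul,
        mul_zero, add_zero]
      exact hMetzler i j h
  have htMnn : ∀ i j, 0 ≤ (t • M) i j := fun i j => by
    simpa using mul_nonneg ht (hMnn i j)
  -- decompositions
  have hA_eq : t • A = t • M - (t * c) • (1 : Matrix S S ℝ) := by
    rw [hM_def]; rw [smul_add, smul_smul]; abel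
  have hB_eq : t • A.submatrix (Subtype.val : Ω → S) Subtype.val
      = (t • M).submatrix (Subtype.val : Ω → S) Subtype.val
        - (t * c) • (1 : Matrix Ω Ω ℝ) := by
    ext i j
    by_cases h : i = j
    · subst h
      simp [hM_def, Matrix.one_apply, Matrix.submatrix_apply]
    · have h' : (i : S) ≠ (j : S) := fun hc => h (Subtype.ext hc)
      simp [hM_def, Matrix.one_apply, Matrix.submatrix_apply, h, h']
  -- entrywise inequality between the exponentials of the nonnegative matrices
  have key : ∀ y : Ω,
      exp ((t • M).submatrix (Subtype.val : Ω → S) Subtype.val) x y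
        ≤ exp (t • M) x.1 y.1 := by
    intro y
    rw [fsp_exp_entry_eq, fsp_exp_entry_eq]
    refine Summable.tsum_le_tsum (fun n => ?_) (fsp_entry_summable _ x y) (fsp_entry_summable _ x.1 y.1)
    have h := fsp_pow_nonneg_and_sub_le (Ω := Ω) (t • M) htMnn n
    have : (0 : ℝ) ≤ ((n.factorial : ℕ) : ℝ)⁻¹ := by positivity
    exact mul_le_mul_of_nonneg_left (h.2 x y) this
  -- nonnegativity of the full exponential entries
  have hexpM_nn : ∀ i j, 0 ≤ exp (t • M) i j := by
    intro i j
    rw [fsp_exp_entry_eq]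
    refine tsum_nonneg fun n => ?_
    have h := fsp_pow_nonneg_and_sub_le (Ω := Ω) (t • M) htMnn n
    have h0 : (0 : ℝ) ≤ ((n.factorial : ℕ) : ℝ)⁻¹ := by positivity
    exact mul_nonneg h0 (h.1 i j)
  have hexpA_nn : ∀ i j, 0 ≤ exp (t • A) i j := by
    intro i j
    rw [hA_eq, fsp_exp_shift]
    simp only [Matrix.smul_apply, smul_eq_mul]
    exact mul_nonneg (Real.exp_nonneg _) (hexpM_nn i j)
  -- entrywise inequality between exp(tB) and exp(tA)
  have keyAB : ∀ y : Ω,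
      exp (t • A.submatrix (Subtype.val : Ω → S) Subtype.val) x y
        ≤ exp (t • A) x.1 y.1 := by
    intro y
    rw [hA_eq, hB_eq, fsp_exp_shift, fsp_exp_shift]
    simp only [Matrix.smul_apply, smul_eq_mul]
    exact mul_le_mul_of_nonneg_left (key y) (Real.exp_nonneg _)
  -- finish with the vector products
  simp only [Matrix.mulVec, dotProduct]
  calc ∑ y : Ω, exp (t • A.submatrix (Subtype.val : Ω → S) Subtype.val) x y * P0 y.1
      ≤ ∑ y : Ω, exp (t • A) x.1 y.1 * P0 y.1 := by
        refine Finset.sum_le_sum fun y _ => ?_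
        exact mul_le_mul_of_nonneg_right (keyAB y) (hP0 y.1)
    _ = ∑ y ∈ Finset.univ.filter (· ∈ Ω), exp (t • A) x.1 y * P0 y :=
        (Finset.sum_subtype _ (by simp) fun y => exp (t • A) x.1 y * P0 y).symm
    _ ≤ ∑ y : S, exp (t • A) x.1 y * P0 y := by
        refine Finset.sum_le_sum_of_subset_of_nonneg (Finset.filter_subset _ _) ?_
        intro k _ _
        exact mul_nonneg (hexpA_nn x.1 k) (hP0 k)
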